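/- (Vanishing linear-smoother remainder term.) Fix x ∈ ℝ^d. For each n, let w_1,...,w_n be (possibly random) weights and X_1,...,X_n random points in ℝ^d, and let c, s : ℝ^d → ℝ. Assume: (1) weight regularity — there exists C < ∞ with Σ_{i=1}^n |w_i(x)| ≤ C almost surely for all n; (2) localization — for every δ > 0, Σ_{i=1}^n |w_i(x)|·1{|X_i − x| > δ} → 0 in probability as n → ∞; (3) c is continuous at x and uniformly bounded by M_a, and s is uniformly bounded by M_b. Then T_n(x) := Σ_{i=1}^n w_i(x)·(c(X_i) − c(x))·s(X_i) → 0 in probability as n → ∞. -/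

import Mathlib

open MeasureTheory Filter
open scoped Classical

noncomputable section

/-- Vanishing linear-smoother remainder term: if the (random) smoother weights are
uniformly summable and localize around `x`, `c` is continuous at `x` and uniformly
bounded, and `s` is uniformly bounded, then the remainder
`T_n = Σ_i w_i (c(X_i) - c(x)) s(X_i)` tends to `0` in probability. -/
theorem linear_smoother_remainder_vanishes
    {Ω : Type*} [MeasurableSpace Ω] (P : Measure Ω) [IsProbabilityMeasure P]
    {d : ℕ} (x : EuclideanSpace ℝ (Fin d))
    (w : ℕ → ℕ → Ω → ℝ) (Xp : ℕ → ℕ → Ω → EuclideanSpace ℝ (Fin d))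
    (c s : EuclideanSpace ℝ (Fin d) → ℝ)
    (hwm : ∀ n i, Measurable (w n i)) (hXpm : ∀ n i, Measurable (Xp n i))
    -- (1) weight regularity
    (C : ℝ)
    (hreg : ∀ n, ∀ᵐ ω ∂P, ∑ i ∈ Finset.range n, |w n i ω| ≤ C)
    -- (2) localization
    (hloc : ∀ δ : ℝ, 0 < δ →
      TendstoInMeasure P
        (fun n ω => ∑ i ∈ Finset.range n,
          |w n i ω| * (if δ < ‖Xp n i ω - x‖ then (1 : ℝ) else 0))
        atTop (fun _ => (0 : ℝ)))
    -- (3) continuity and boundedness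
    (Ma Mb : ℝ)
    (hccont : ContinuousAt c x)
    (hcbdd : ∀ y, |c y| ≤ Ma) (hsbdd : ∀ y, |s y| ≤ Mb) :
    TendstoInMeasure P
      (fun n ω => ∑ i ∈ Finset.range n,
        w n i ω * (c (Xp n i ω) - c x) * s (Xp n i ω))
      atTop (fun _ => (0 : ℝ)) := by
  classical
  rw [tendstoInMeasure_iff_dist]
  intro ε hε
  have hMb : 0 ≤ Mb := (abs_nonneg _).trans (hsbdd 0)
  have hMa : 0 ≤ Ma := (abs_nonneg _).trans (hcbdd 0)
  haveI : (MeasureTheory.ae P).NeBot := ae_neBot.mpr (IsProbabilityMeasure.ne_zero P)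
  have hC : (0:ℝ) ≤ C := by
    obtain ⟨ω, hω⟩ := (hreg 0).exists
    simpa using hω
  set η : ℝ := ε / (2*Mb*C + 2) with hηdef
  have hηpos : 0 < η := div_pos hε (by positivity)
  have hηC : η * (Mb * C) ≤ ε / 2 := by
    rw [hηdef, div_mul_eq_mul_div, div_le_div_iff₀ (by positivity) (by norm_num)]
    nlinarith
  obtain ⟨δ, hδpos, hδ⟩ := Metric.continuousAt_iff.mp hccont η hηpos
  set K : ℝ := 2*Ma*Mb + 1 with hKdef
  have hK : 0 < K := by positivity
  set ε' : ℝ := ε / (2*K) with hε'def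
  have hε'pos : 0 < ε' := by positivity
  have key : ∀ n, ∀ᵐ ω ∂P,
      ε ≤ dist (∑ i ∈ Finset.range n, w n i ω * (c (Xp n i ω) - c x) * s (Xp n i ω)) 0 →
      ε' ≤ dist (∑ i ∈ Finset.range n,
        |w n i ω| * (if δ/2 < ‖Xp n i ω - x‖ then (1:ℝ) else 0)) 0 := by
    intro n
    filter_upwards [hreg n] with ω hCω hT
    set L := ∑ i ∈ Finset.range n, |w n i ω| * (if δ/2 < ‖Xp n i ω - x‖ then (1:ℝ) else 0)
      with hLdef
    have hL0 : 0 ≤ L := Finset.sum_nonneg (fun i _ => by positivity)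
    have hbound : |∑ i ∈ Finset.range n, w n i ω * (c (Xp n i ω) - c x) * s (Xp n i ω)|
        ≤ η * Mb * (∑ i ∈ Finset.range n, |w n i ω|) + 2*Ma*Mb * L := by
      calc |∑ i ∈ Finset.range n, w n i ω * (c (Xp n i ω) - c x) * s (Xp n i ω)|
          ≤ ∑ i ∈ Finset.range n, |w n i ω * (c (Xp n i ω) - c x) * s (Xp n i ω)| :=
            Finset.abs_sum_le_sum_abs _ _
        _ ≤ ∑ i ∈ Finset.range n, (η * Mb * |w n i ω|
              + 2*Ma*Mb * (|w n i ω| * (if δ/2 < ‖Xp n i ω - x‖ then (1:ℝ) else 0))) := by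
            refine Finset.sum_le_sum fun i _ => ?_
            rw [abs_mul, abs_mul]
            have hw0 : 0 ≤ |w n i ω| := abs_nonneg _
            have hs : |s (Xp n i ω)| ≤ Mb := hsbdd _
            have hs0 : 0 ≤ |s (Xp n i ω)| := abs_nonneg _
            have hc0 : 0 ≤ |c (Xp n i ω) - c x| := abs_nonneg _
            by_cases hfar : δ/2 < ‖Xp n i ω - x‖
            · have h2a : |c (Xp n i ω) - c x| ≤ 2 * Ma := by
                calc |c (Xp n i ω) - c x| ≤ |c (Xp n i ω)| + |c x| := abs_sub _ _
                  _ ≤ 2 * Ma := by linarith [hcbdd (Xp n i ω), hcbdd x]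
              simp only [hfar, if_pos]
              have hcs : |c (Xp n i ω) - c x| * |s (Xp n i ω)| ≤ 2*Ma*Mb :=
                mul_le_mul h2a hs hs0 (by positivity)
              have : |w n i ω| * (|c (Xp n i ω) - c x| * |s (Xp n i ω)|)
                  ≤ |w n i ω| * (2*Ma*Mb) := mul_le_mul_of_nonneg_left hcs hw0
              have hpos : 0 ≤ η * Mb * |w n i ω| := by positivity
              nlinarith
            · have hnear : dist (Xp n i ω) x < δ := by
                rw [dist_eq_norm]
                push_neg at hfar
                linarith
              have hcl : |c (Xp n i ω) - c x| < η := by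
                have := hδ hnear
                rwa [Real.dist_eq] at this
              simp only [hfar, if_neg, not_false_iff, mul_zero]
              have hcs : |c (Xp n i ω) - c x| * |s (Xp n i ω)| ≤ η*Mb :=
                mul_le_mul hcl.le hs hs0 hηpos.le
              have : |w n i ω| * (|c (Xp n i ω) - c x| * |s (Xp n i ω)|)
                  ≤ |w n i ω| * (η*Mb) := mul_le_mul_of_nonneg_left hcs hw0
              nlinarith
        _ = η * Mb * (∑ i ∈ Finset.range n, |w n i ω|) + 2*Ma*Mb * L := by
            rw [Finset.sum_add_distrib, ← Finset.mul_sum, ← Finset.mul_sum]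
    rw [Real.dist_eq, sub_zero] at hT ⊢
    rw [abs_of_nonneg hL0]
    have hη0 : 0 ≤ η * Mb := by positivity
    have h1 : η * Mb * (∑ i ∈ Finset.range n, |w n i ω|) ≤ ε / 2 := by
      nlinarith [Finset.sum_nonneg (fun i (_ : i ∈ Finset.range n) => abs_nonneg (w n i ω))]
    have h2 : ε / 2 ≤ 2*Ma*Mb * L := by linarith
    rw [hε'def, div_le_iff₀ (by positivity)]
    nlinarith
  have hle : ∀ n,
      P {ω | ε ≤ dist (∑ i ∈ Finset.range n, w n i ω * (c (Xp n i ω) - c x) * s (Xp n i ω)) 0}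
      ≤ P {ω | ε' ≤ dist (∑ i ∈ Finset.range n,
          |w n i ω| * (if δ/2 < ‖Xp n i ω - x‖ then (1:ℝ) else 0)) 0} := by
    intro n
    refine measure_mono_ae ((key n).mono fun ω h hω => ?_)
    exact h hω
  have hloc' := tendstoInMeasure_iff_dist.mp (hloc (δ/2) (by positivity)) ε' hε'pos
  simp only [dist_zero_right] at hloc' hle ⊢
  exact tendsto_of_tendsto_of_tendsto_of_le_of_le tendsto_const_nhds hloc'
    (fun n => zero_le) hle
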